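/- Let h₀ : ℝⁿ → ℝ and k₀ : ℝⁿ → ℝᵖ be continuously differentiable, μ > 0, and h(x,ξ) = h₀(x) - (1/(2μ))‖ξ - k₀(x)‖². Suppose ∇h₀(x) ≠ 0 whenever h₀(x) = 0. Then for every (x,ξ) with h(x,ξ) = 0, the full gradient of h at (x,ξ) is nonzero. -/

import Mathlib

open InnerProductSpace

theorem stmt_6 (n p : ℕ)
    (h₀ : EuclideanSpace ℝ (Fin n) → ℝ)
    (k₀ : EuclideanSpace ℝ (Fin n) → EuclideanSpace ℝ (Fin p))
    (hh₀ : ContDiff ℝ 1 h₀) (hk₀ : ContDiff ℝ 1 k₀)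
    (μ : ℝ) (hμ : 0 < μ)
    (h : EuclideanSpace ℝ (Fin n) × EuclideanSpace ℝ (Fin p) → ℝ)
    (hdef : ∀ x ξ, h (x, ξ) = h₀ x - (1 / (2 * μ)) * ‖ξ - k₀ x‖ ^ 2)
    (hgrad : ∀ x, h₀ x = 0 → gradient h₀ x ≠ 0) :
    ∀ x ξ, h (x, ξ) = 0 → fderiv ℝ h (x, ξ) ≠ 0 := by
  intro x ξ hzero
  set c : ℝ := 1 / (2 * μ) with hc
  have hcpos : 0 < c := by positivity
  have hfun : h = fun q : EuclideanSpace ℝ (Fin n) × EuclideanSpace ℝ (Fin p) =>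
      h₀ q.1 - c * ‖q.2 - k₀ q.1‖ ^ 2 := funext fun q => hdef q.1 q.2
  -- derivatives
  have hD₀ : HasFDerivAt h₀ (fderiv ℝ h₀ x) x :=
    ((hh₀.differentiable one_ne_zero) x).hasFDerivAt
  have hDk : HasFDerivAt k₀ (fderiv ℝ k₀ x) x :=
    ((hk₀.differentiable one_ne_zero) x).hasFDerivAt
  -- w q = q.2 - k₀ q.1
  have hw : HasFDerivAt
      (fun q : EuclideanSpace ℝ (Fin n) × EuclideanSpace ℝ (Fin p) => q.2 - k₀ q.1)
      ((ContinuousLinearMap.snd ℝ _ _) - (fderiv ℝ k₀ x).comp (ContinuousLinearMap.fst ℝ _ _))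
      (x, ξ) :=
    (hasFDerivAt_snd).sub (hDk.comp (x, ξ) hasFDerivAt_fst)
  set W : (EuclideanSpace ℝ (Fin n) × EuclideanSpace ℝ (Fin p)) →L[ℝ] EuclideanSpace ℝ (Fin p) :=
    (ContinuousLinearMap.snd ℝ _ _) - (fderiv ℝ k₀ x).comp (ContinuousLinearMap.fst ℝ _ _) with hW
  have hsq : HasFDerivAt
      (fun q : EuclideanSpace ℝ (Fin n) × EuclideanSpace ℝ (Fin p) => ‖q.2 - k₀ q.1‖ ^ 2)
      ((fderivInnerCLM ℝ (ξ - k₀ x, ξ - k₀ x)).comp (W.prod W)) (x, ξ) := by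
    have := (hw.inner ℝ hw)
    simp only [real_inner_self_eq_norm_sq] at this
    exact this
  have hg : HasFDerivAt h
      (((fderiv ℝ h₀ x).comp (ContinuousLinearMap.fst ℝ _ _)) -
        c • ((fderivInnerCLM ℝ (ξ - k₀ x, ξ - k₀ x)).comp (W.prod W))) (x, ξ) := by
    rw [hfun]
    exact (hD₀.comp (x, ξ) hasFDerivAt_fst).sub (hsq.const_smul c)
  have hDh := hg.fderiv
  intro hne
  rw [hne] at hDh
  -- evaluate
  have heval : ∀ u v, (0 : ℝ) = fderiv ℝ h₀ x u -
      c * (⟪ξ - k₀ x, v - fderiv ℝ k₀ x u⟫_ℝ + ⟪v - fderiv ℝ k₀ x u, ξ - k₀ x⟫_ℝ) := by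
    intro u v
    have := congrArg (fun L : (EuclideanSpace ℝ (Fin n) × EuclideanSpace ℝ (Fin p)) →L[ℝ] ℝ =>
      L (u, v)) hDh
    simpa [hW, fderivInnerCLM_apply, ContinuousLinearMap.sub_apply,
      ContinuousLinearMap.smul_apply, ContinuousLinearMap.comp_apply] using this
  by_cases hxi : ξ = k₀ x
  · -- then h₀ x = 0, gradient nonzero, contradiction
    have hh0 : h₀ x = 0 := by
      simpa [hxi] using (hzero.symm.trans (hdef x ξ)).symm
    have hgnz := hgrad x hh0
    have hf0 : fderiv ℝ h₀ x = 0 := by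
      ext u
      have := heval u (fderiv ℝ k₀ x u)
      simpa [hxi] using this.symm
    apply hgnz
    rw [gradient, hf0]
    simp
  · have := heval 0 (ξ - k₀ x)
    simp only [map_zero, sub_zero, real_inner_self_eq_norm_sq] at this
    have hnz : ‖ξ - k₀ x‖ ^ 2 ≠ 0 := by
      simpa [sub_eq_zero] using hxi
    have hpos : c * (‖ξ - k₀ x‖ ^ 2 + ‖ξ - k₀ x‖ ^ 2) ≠ 0 := by positivity
    apply hpos
    linarith
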